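/- arXiv:1601.05491 — 2 statements merged into one kernel-verified Lean document; each statement's English description precedes it below -/
import Mathlib

section
/- Let p be a positive nonsquare integer and let m, n be positive integers satisfying n² − p·m² = 1. Then √p = (n/m) · Σ_{k=0}^{∞} ((1/2)_k / k!) · (−1/(p·m²))^k, where the series on the right converges. -/
/-- The shifted factorial (Pochhammer symbol): `(x)_0 = 1` and
`(x)_n = x * (x+1) * ... * (x+n-1)`. -/
noncomputable def shiftedFactorial (x : ℝ) (n : ℕ) : ℝ :=
  ∏ i ∈ Finset.range n, (x + i)

open Finset Polynomial

lemma sf_succ (x : ℝ) (k : ℕ) :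
    shiftedFactorial x (k+1) = shiftedFactorial x k * (x + k) :=
  Finset.prod_range_succ _ _

lemma desc_smeval_succ (r : ℝ) (k : ℕ) :
    (descPochhammer ℤ (k+1)).smeval r = (descPochhammer ℤ k).smeval r * (r - k) := by
  rw [descPochhammer_succ_right, smeval_mul, smeval_sub, smeval_X, smeval_natCast]
  simp

lemma desc_half (k : ℕ) :
    (descPochhammer ℤ k).smeval (-(1/2) : ℝ) = (-1)^k * shiftedFactorial (1/2) k := by
  induction k with
  | zero => simp [shiftedFactorial, descPochhammer]
  | succ k ih =>
      rw [desc_smeval_succ, ih, sf_succ, pow_succ]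
      ring

lemma desc_negone (k : ℕ) :
    (descPochhammer ℤ k).smeval (-1 : ℝ) = (-1)^k * k.factorial := by
  induction k with
  | zero => simp [descPochhammer]
  | succ k ih =>
      rw [desc_smeval_succ, ih, Nat.factorial_succ, pow_succ]
      push_cast
      ring

lemma choose_eval (r : ℝ) (k : ℕ) :
    Ring.choose r k = (descPochhammer ℤ k).smeval r / k.factorial := by
  rw [Ring.descPochhammer_eq_factorial_smul_choose, nsmul_eq_mul]
  field_simp [Nat.factorial_ne_zero]

lemma choose_half (k : ℕ) :
    Ring.choose (-(1/2) : ℝ) k = (-1)^k * shiftedFactorial (1/2) k / k.factorial := by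
  rw [choose_eval, desc_half]

lemma choose_negone (k : ℕ) : Ring.choose (-1 : ℝ) k = (-1)^k := by
  rw [choose_eval, desc_negone]
  field_simp [Nat.factorial_ne_zero]

lemma sf_nonneg (k : ℕ) : 0 ≤ shiftedFactorial (1/2) k := by
  apply Finset.prod_nonneg
  intro i _
  positivity

lemma sf_le_factorial (k : ℕ) : shiftedFactorial (1/2) k ≤ k.factorial := by
  induction k with
  | zero => simp [shiftedFactorial]
  | succ k ih =>
      rw [sf_succ, Nat.factorial_succ]
      push_cast
      have h1 : (1/2 : ℝ) + k ≤ k + 1 := by linarith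
      have := sf_nonneg k
      nlinarith [(Nat.cast_pos (α := ℝ)).mpr (Nat.factorial_pos k)]

lemma sf_le_half (k : ℕ) :
    shiftedFactorial (1/2) (k+1) ≤ (1/2) * (k+1).factorial := by
  induction k with
  | zero => simp [shiftedFactorial]
  | succ k ih =>
      rw [sf_succ, Nat.factorial_succ (k+1)]
      push_cast
      have h1 : (1/2 : ℝ) + (k+1) ≤ (k+1) + 1 := by linarith
      have h2 := sf_nonneg (k+1)
      nlinarith [(Nat.cast_pos (α := ℝ)).mpr (Nat.factorial_pos (k+1))]

theorem sqrt_series_1F0_neg (p m n : ℕ) (hp : 0 < p) (hps : ¬ IsSquare p)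
    (hm : 0 < m) (hn : 0 < n) (hpell : (n : ℤ) ^ 2 - p * m ^ 2 = 1) :
    Summable (fun k : ℕ => shiftedFactorial (1/2) k / (Nat.factorial k : ℝ) * (-(1 / (p * m ^ 2)) : ℝ) ^ k) ∧
    Real.sqrt p = (n / m : ℝ) *
      ∑' k : ℕ, shiftedFactorial (1/2) k / (Nat.factorial k : ℝ) * (-(1 / (p * m ^ 2)) : ℝ) ^ k := by
  -- setup
  set x : ℝ := 1 / (p * m ^ 2) with hxdef
  have hp2 : 2 ≤ p := by
    rcases Nat.lt_or_ge p 2 with h | h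
    · interval_cases p
      exact absurd ⟨1, rfl⟩ hps
    · exact h
  have hpm2 : (2 : ℝ) ≤ (p : ℝ) * m ^ 2 := by
    have : (2 : ℕ) ≤ p * m ^ 2 :=
      le_trans hp2 (Nat.le_mul_of_pos_right p (by positivity))
    exact_mod_cast this
  have hpm0 : (0 : ℝ) < (p : ℝ) * m ^ 2 := by linarith
  have hx0 : 0 < x := by positivity
  have hxle : x ≤ 1/2 := by
    rw [hxdef, div_le_div_iff₀ hpm0 (by norm_num)]
    linarith
  have hx1 : x < 1 := by linarith
  -- rewrite the series term
  have hterm : (fun k : ℕ => shiftedFactorial (1/2) k / (Nat.factorial k : ℝ) * (-(1 / (p * m ^ 2)) : ℝ) ^ k)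
      = fun k : ℕ => Ring.choose (-(1/2) : ℝ) k * x ^ k := by
    funext k
    rw [choose_half, ← hxdef, neg_pow]
    ring
  rw [hterm]
  set t : ℕ → ℝ := fun k => Ring.choose (-(1/2) : ℝ) k * x ^ k with htdef
  -- norm bounds
  have habs : ∀ k, ‖t k‖ = shiftedFactorial (1/2) k / (Nat.factorial k : ℝ) * x ^ k := by
    intro k
    rw [htdef]
    simp only
    rw [Real.norm_eq_abs, abs_mul, abs_pow, abs_of_nonneg hx0.le]
    congr 1
    rw [choose_half, abs_div, abs_mul, abs_pow, abs_neg, abs_one, one_pow, one_mul,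
      abs_of_nonneg (sf_nonneg k), Nat.abs_cast]
  have hbound : ∀ k, ‖t k‖ ≤ x ^ k := by
    intro k
    rw [habs k]
    have h1 : shiftedFactorial (1/2) k / (Nat.factorial k : ℝ) ≤ 1 := by
      rw [div_le_one (by exact_mod_cast Nat.factorial_pos k)]
      exact sf_le_factorial k
    nlinarith [pow_nonneg hx0.le k, sf_nonneg k,
      div_nonneg (sf_nonneg k) (Nat.cast_nonneg (Nat.factorial k))]
  have hgeom : Summable (fun k : ℕ => x ^ k) :=
    summable_geometric_of_lt_one hx0.le hx1
  have hnorm : Summable (fun k => ‖t k‖) :=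
    Summable.of_nonneg_of_le (fun k => norm_nonneg _) hbound hgeom
  have hsum : Summable t := hnorm.of_norm
  refine ⟨hsum, ?_⟩
  set S : ℝ := ∑' k, t k with hSdef
  -- Cauchy product
  have hcauchy : S * S = ∑' k : ℕ, ∑ ij ∈ Finset.HasAntidiagonal.antidiagonal k, t ij.1 * t ij.2 :=
    tsum_mul_tsum_eq_tsum_sum_antidiagonal_of_summable_norm hnorm hnorm
  have hinner : ∀ k : ℕ, ∑ ij ∈ Finset.HasAntidiagonal.antidiagonal k, t ij.1 * t ij.2 = (-x) ^ k := by
    intro k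
    have hv := Ring.add_choose_eq (r := (-(1/2) : ℝ)) (s := (-(1/2) : ℝ)) k (Commute.all _ _)
    have h12 : (-(1/2) : ℝ) + (-(1/2)) = -1 := by norm_num
    rw [h12, choose_negone] at hv
    calc ∑ ij ∈ Finset.HasAntidiagonal.antidiagonal k, t ij.1 * t ij.2
        = ∑ ij ∈ Finset.HasAntidiagonal.antidiagonal k,
            (Ring.choose (-(1/2) : ℝ) ij.1 * Ring.choose (-(1/2) : ℝ) ij.2) * x ^ k := by
          apply Finset.sum_congr rfl
          intro ij hij
          have : ij.1 + ij.2 = k := Finset.HasAntidiagonal.mem_antidiagonal.mp hij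
          rw [htdef]
          simp only
          rw [← this, pow_add]
          ring
      _ = (∑ ij ∈ Finset.HasAntidiagonal.antidiagonal k,
            Ring.choose (-(1/2) : ℝ) ij.1 * Ring.choose (-(1/2) : ℝ) ij.2) * x ^ k := by
          rw [Finset.sum_mul]
      _ = (-1 : ℝ) ^ k * x ^ k := by rw [← hv]
      _ = (-x) ^ k := (neg_pow x k).symm
  have hS2 : S * S = (1 + x)⁻¹ := by
    rw [hcauchy, tsum_congr hinner, tsum_geometric_of_norm_lt_one (by
      rw [norm_neg, Real.norm_eq_abs, abs_of_nonneg hx0.le]; exact hx1)]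
    congr 1
    ring
  -- positivity of S
  have ht0 : t 0 = 1 := by simp [htdef, Ring.choose_zero_right]
  have hSsplit : S = t 0 + ∑' k, t (k + 1) := Summable.tsum_eq_zero_add hsum
  have htail_bound : ∀ k : ℕ, ‖t (k + 1)‖ ≤ (1/2) * (1/2) ^ (k + 1) := by
    intro k
    rw [habs]
    have h1 : shiftedFactorial (1/2) (k+1) / (Nat.factorial (k+1) : ℝ) ≤ 1/2 := by
      rw [div_le_iff₀ (by exact_mod_cast Nat.factorial_pos (k+1))]
      exact sf_le_half k
    have h2 : x ^ (k+1) ≤ (1/2) ^ (k+1) := pow_le_pow_left₀ hx0.le hxle (k+1)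
    have h3 : (0:ℝ) ≤ x ^ (k+1) := pow_nonneg hx0.le (k+1)
    nlinarith [div_nonneg (sf_nonneg (k+1)) (Nat.cast_nonneg (Nat.factorial (k+1)))]
  have hhalf : Summable (fun k : ℕ => (1/2 : ℝ) * (1/2) ^ (k+1)) := by
    apply Summable.mul_left
    exact (summable_geometric_of_lt_one (by norm_num) (by norm_num)).comp_injective
      (add_left_injective 1)
  have htail : ‖∑' k, t (k + 1)‖ ≤ 1/2 := by
    calc ‖∑' k, t (k + 1)‖ ≤ ∑' k : ℕ, (1/2 : ℝ) * (1/2) ^ (k+1) :=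
          tsum_of_norm_bounded hhalf.hasSum htail_bound
      _ = (1/2) * ∑' k : ℕ, (1/2 : ℝ) ^ (k+1) := tsum_mul_left
      _ = (1/2) * ((1/2) * ∑' k : ℕ, (1/2 : ℝ) ^ k) := by
          congr 1
          rw [← tsum_mul_left]
          exact tsum_congr fun k => by rw [pow_succ']
      _ = (1/2) * ((1/2) * (1 - 1/2)⁻¹) := by
          rw [tsum_geometric_of_lt_one (by norm_num) (by norm_num)]
      _ = 1/2 := by norm_num
  have hSpos : 0 < S := by
    have := abs_le.mp (by rwa [Real.norm_eq_abs] at htail)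
    rw [hSsplit, ht0]
    linarith [this.1]
  -- compute S
  have hn2 : ((n : ℝ)) ^ 2 = (p : ℝ) * m ^ 2 + 1 := by
    have : ((n : ℤ)) ^ 2 = (p : ℤ) * m ^ 2 + 1 := by linarith [hpell]
    exact_mod_cast this
  have hnR : (0:ℝ) < n := by exact_mod_cast hn
  have hmR : (0:ℝ) < m := by exact_mod_cast hm
  have hpR : (0:ℝ) < p := by exact_mod_cast hp
  have h1x : (1 : ℝ) + x = (n:ℝ)^2 / ((p:ℝ) * m^2) := by
    rw [hxdef, hn2]
    field_simp
  have hS2' : S ^ 2 = (p:ℝ) * m^2 / (n:ℝ)^2 := by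
    rw [pow_two, hS2, h1x]
    rw [inv_div]
  have hSval : S = Real.sqrt p * m / n := by
    have : S = Real.sqrt (S ^ 2) := (Real.sqrt_sq hSpos.le).symm
    rw [this, hS2', Real.sqrt_div' _ (by positivity), Real.sqrt_mul (by positivity)]
    · rw [Real.sqrt_sq hmR.le, Real.sqrt_sq hnR.le]
    all_goals positivity
  rw [hSval]
  field_simp
end

section
/- The following series identity holds: √7 = (2024/765) · Σ_{k=0}^{∞} ((1/4)_k (3/4)_k / (k! (3/2)_k)) · (−16386304/16781926730625)^k, where the series on the right converges. -/
open Finset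

lemma catalan_le_four_pow (n : ℕ) : catalan n ≤ 4 ^ n := by
  have h1 : (n + 1) * catalan n = n.centralBinom := succ_mul_catalan_eq_centralBinom n
  have h2 : n.centralBinom ≤ 4 ^ n := by
    calc n.centralBinom = (2 * n).choose n := rfl
      _ ≤ ∑ m ∈ range (2 * n + 1), (2 * n).choose m :=
          Finset.single_le_sum (fun i _ => Nat.zero_le _) (Finset.mem_range.mpr (by omega))
      _ = 2 ^ (2 * n) := Nat.sum_range_choose (2 * n)
      _ = 4 ^ n := by rw [pow_mul]; norm_num
  calc catalan n ≤ (n + 1) * catalan n := Nat.le_mul_of_pos_left _ (by omega)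
    _ = n.centralBinom := h1
    _ ≤ 4 ^ n := h2

lemma sum_split_even {M : Type*} [AddCommMonoid M] (f : ℕ → M) (n : ℕ) :
    ∑ i ∈ range (2 * n + 2), f i
      = ∑ a ∈ range (n + 1), f (2 * a) + ∑ a ∈ range (n + 1), f (2 * a + 1) := by
  induction n with
  | zero => simp [sum_range_succ]
  | succ n ih =>
    have h : 2 * (n + 1) + 2 = (2 * n + 2) + 1 + 1 := by ring
    rw [h, sum_range_succ, sum_range_succ, ih, sum_range_succ (fun a => f (2 * a)) (n + 1),
      sum_range_succ (fun a => f (2 * a + 1)) (n + 1),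
      show 2 * n + 2 + 1 = 2 * n + 3 from rfl]
    abel

lemma sum_split_odd {M : Type*} [AddCommMonoid M] (f : ℕ → M) (n : ℕ) :
    ∑ i ∈ range (2 * n + 1), f i
      = ∑ a ∈ range (n + 1), f (2 * a) + ∑ a ∈ range n, f (2 * a + 1) := by
  cases n with
  | zero => simp
  | succ n =>
    have h : 2 * (n + 1) + 1 = 2 * n + 2 + 1 := by ring
    rw [h, sum_range_succ, sum_split_even, sum_range_succ (fun a => f (2 * a)) (n + 1)]
    abel

lemma cat_even (n : ℕ) :
    catalan (2 * n + 2) = 2 * ∑ i ∈ range (n + 1), catalan (2 * i) * catalan (2 * (n - i) + 1) := by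
  have h : catalan (2 * n + 2) = ∑ k ∈ range (2 * n + 2), catalan k * catalan (2 * n + 1 - k) := by
    rw [show 2 * n + 2 = (2 * n + 1) + 1 from rfl, catalan_succ' (2 * n + 1),
      Finset.Nat.sum_antidiagonal_eq_sum_range_succ (fun x y => catalan x * catalan y)]
  rw [h, sum_split_even (fun k => catalan k * catalan (2 * n + 1 - k))]
  have h1 : ∑ a ∈ range (n + 1), catalan (2 * a) * catalan (2 * n + 1 - 2 * a)
      = ∑ a ∈ range (n + 1), catalan (2 * a) * catalan (2 * (n - a) + 1) := by
    apply Finset.sum_congr rfl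
    intro a ha
    have hle : a ≤ n := by simpa [Nat.lt_succ] using Finset.mem_range.mp ha
    rw [show 2 * n + 1 - 2 * a = 2 * (n - a) + 1 from by omega]
  have h2 : ∑ a ∈ range (n + 1), catalan (2 * a + 1) * catalan (2 * n + 1 - (2 * a + 1))
      = ∑ a ∈ range (n + 1), catalan (2 * a) * catalan (2 * (n - a) + 1) := by
    rw [← Finset.sum_range_reflect (fun a => catalan (2 * a) * catalan (2 * (n - a) + 1)) (n + 1)]
    apply Finset.sum_congr rfl
    intro a ha
    have : a ≤ n := by simpa [Nat.lt_succ] using Finset.mem_range.mp ha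
    have e1 : 2 * n + 1 - (2 * a + 1) = 2 * (n + 1 - 1 - a) := by omega
    have e2 : 2 * (n - (n + 1 - 1 - a)) + 1 = 2 * a + 1 := by omega
    rw [e1, e2, mul_comm]
  rw [h1, h2]
  ring

lemma cat_odd (n : ℕ) :
    catalan (2 * n + 1) = ∑ i ∈ range (n + 1), catalan (2 * i) * catalan (2 * (n - i))
      + ∑ i ∈ range n, catalan (2 * i + 1) * catalan (2 * (n - 1 - i) + 1) := by
  have h : catalan (2 * n + 1) = ∑ k ∈ range (2 * n + 1), catalan k * catalan (2 * n - k) := by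
    rw [catalan_succ' (2 * n),
      Finset.Nat.sum_antidiagonal_eq_sum_range_succ (fun x y => catalan x * catalan y)]
  rw [h, sum_split_odd (fun k => catalan k * catalan (2 * n - k))]
  congr 1
  · apply Finset.sum_congr rfl
    intro a ha
    have hle : a ≤ n := by simpa [Nat.lt_succ] using Finset.mem_range.mp ha
    rw [show 2 * n - 2 * a = 2 * (n - a) from by omega]
  · apply Finset.sum_congr rfl
    intro a ha
    have hlt : a < n := Finset.mem_range.mp ha
    rw [show 2 * n - (2 * a + 1) = 2 * (n - 1 - a) + 1 from by omega]


lemma shiftedFactorial_succ (x : ℝ) (n : ℕ) :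
    shiftedFactorial x (n + 1) = shiftedFactorial x n * (x + n) := by
  simp [shiftedFactorial, Finset.prod_range_succ]

lemma shiftedFactorial_pos {x : ℝ} (hx : 0 < x) (n : ℕ) : 0 < shiftedFactorial x n := by
  apply Finset.prod_pos
  intro i _
  positivity

lemma cat_rec (k : ℕ) :
    ((catalan (2 * k + 2) : ℝ)) * ((2 * k + 2) * (2 * k + 3))
      = 4 * (4 * k + 1) * (4 * k + 3) * (catalan (2 * k)) := by
  have h1 : ((2 * k + 1 : ℝ)) * (catalan (2 * k) : ℝ) = ((2 * k).centralBinom : ℝ) := by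
    exact_mod_cast succ_mul_catalan_eq_centralBinom (2 * k)
  have h2 : ((2 * k + 3 : ℝ)) * (catalan (2 * k + 2) : ℝ) = ((2 * k + 2).centralBinom : ℝ) := by
    have := succ_mul_catalan_eq_centralBinom (2 * k + 2)
    simp only [show 2 * k + 2 + 1 = 2 * k + 3 from rfl] at this
    exact_mod_cast this
  have h3 : ((2 * k + 2 : ℝ)) * ((2 * k + 2).centralBinom : ℝ)
      = 2 * (4 * k + 3) * ((2 * k + 1).centralBinom : ℝ) := by
    have := Nat.succ_mul_centralBinom_succ (2 * k + 1)
    simp only [show 2 * k + 1 + 1 = 2 * k + 2 from rfl,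
      show 2 * (2 * k + 1) + 1 = 4 * k + 3 from by ring] at this
    exact_mod_cast this
  have h4 : ((2 * k + 1 : ℝ)) * ((2 * k + 1).centralBinom : ℝ)
      = 2 * (4 * k + 1) * ((2 * k).centralBinom : ℝ) := by
    have := Nat.succ_mul_centralBinom_succ (2 * k)
    simp only [show 2 * (2 * k) + 1 = 4 * k + 1 from by ring] at this
    exact_mod_cast this
  have hne : ((2 : ℝ) * k + 1) ≠ 0 := by positivity
  have hb1 : ((2 * k + 1).centralBinom : ℝ) = 2 * (4 * k + 1) * (catalan (2 * k) : ℝ) := by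
    apply mul_left_cancel₀ hne
    rw [h4, ← h1]; ring
  linear_combination (2 * (k : ℝ) + 2) * h2 + h3 + 2 * (4 * (k : ℝ) + 3) * hb1

lemma key_coeff (k : ℕ) :
    (catalan (2 * k) : ℝ) * ((k.factorial : ℝ) * shiftedFactorial (3/2) k)
      = 16 ^ k * (shiftedFactorial (1/4) k * shiftedFactorial (3/4) k) := by
  induction k with
  | zero => simp [shiftedFactorial]
  | succ k ih =>
    have hrec := cat_rec k
    have hpos : ((2 : ℝ) * k + 2) * (2 * k + 3) ≠ 0 := by positivity
    apply mul_right_cancel₀ hpos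
    rw [show 2 * (k + 1) = 2 * k + 2 from by ring]
    rw [shiftedFactorial_succ, shiftedFactorial_succ, shiftedFactorial_succ,
      Nat.factorial_succ]
    push_cast
    linear_combination ((k : ℝ) + 1) * (k.factorial : ℝ) * shiftedFactorial (3/2) k
        * (3/2 + k) * hrec
      + 4 * (4 * (k : ℝ) + 1) * (4 * k + 3) * (k + 1) * (3/2 + k) * ih

noncomputable def yc : ℝ := -(1024144 / 16781926730625)

lemma abs_yc : |yc| = 1024144 / 16781926730625 := by
  rw [yc, abs_neg, abs_of_nonneg] <;> norm_num

lemma term_eq (k : ℕ) :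
    shiftedFactorial (1/4) k * shiftedFactorial (3/4) k
      / ((Nat.factorial k : ℝ) * shiftedFactorial (3/2) k)
      * (-(16386304 / 16781926730625) : ℝ) ^ k
    = (catalan (2 * k) : ℝ) * yc ^ k := by
  have hP : ((Nat.factorial k : ℝ) * shiftedFactorial (3/2) k) ≠ 0 := by
    have h1 : (0:ℝ) < Nat.factorial k := by positivity
    have h2 := shiftedFactorial_pos (x := 3/2) (by norm_num) k
    positivity
  rw [div_mul_eq_mul_div, div_eq_iff hP]
  have hw : ((-(16386304 / 16781926730625) : ℝ)) ^ k = 16 ^ k * yc ^ k := by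
    rw [← mul_pow, yc]; norm_num
  rw [hw]
  linear_combination (-(yc ^ k)) * key_coeff k

lemma cat_cast_le (n : ℕ) : (catalan n : ℝ) ≤ 4 ^ n := by
  exact_mod_cast catalan_le_four_pow n

lemma f_norm_le (k : ℕ) : ‖(catalan (2 * k) : ℝ) * yc ^ k‖ ≤ (16 * |yc|) ^ k := by
  rw [norm_mul, norm_pow, Real.norm_eq_abs yc, Real.norm_natCast, mul_pow]
  have h1 : (catalan (2 * k) : ℝ) ≤ 16 ^ k := by
    calc (catalan (2 * k) : ℝ) ≤ 4 ^ (2 * k) := cat_cast_le (2 * k)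
      _ = 16 ^ k := by rw [pow_mul]; norm_num
  exact mul_le_mul h1 le_rfl (by positivity) (by positivity)

lemma g_norm_le (k : ℕ) : ‖(catalan (2 * k + 1) : ℝ) * yc ^ k‖ ≤ 4 * (16 * |yc|) ^ k := by
  rw [norm_mul, norm_pow, Real.norm_eq_abs yc, Real.norm_natCast, mul_pow, ← mul_assoc]
  have h1 : (catalan (2 * k + 1) : ℝ) ≤ 4 * 16 ^ k := by
    calc (catalan (2 * k + 1) : ℝ) ≤ 4 ^ (2 * k + 1) := cat_cast_le (2 * k + 1)
      _ = 4 * 16 ^ k := by rw [pow_succ, pow_mul]; ring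
  exact mul_le_mul h1 le_rfl (by positivity) (by positivity)

lemma hq : 16 * |yc| < 1 := by rw [abs_yc]; norm_num
lemma hq0 : 0 ≤ 16 * |yc| := by positivity

lemma summable_geo : Summable (fun k : ℕ => (16 * |yc|) ^ k) :=
  summable_geometric_of_lt_one hq0 hq

lemma hfn : Summable (fun k : ℕ => ‖(catalan (2 * k) : ℝ) * yc ^ k‖) :=
  Summable.of_nonneg_of_le (fun k => norm_nonneg _) f_norm_le summable_geo

lemma hgn : Summable (fun k : ℕ => ‖(catalan (2 * k + 1) : ℝ) * yc ^ k‖) :=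
  Summable.of_nonneg_of_le (fun k => norm_nonneg _) g_norm_le (summable_geo.mul_left 4)

noncomputable def fA (k : ℕ) : ℝ := (catalan (2 * k) : ℝ) * yc ^ k
noncomputable def gB (k : ℕ) : ℝ := (catalan (2 * k + 1) : ℝ) * yc ^ k

noncomputable def AA : ℝ := ∑' k, fA k
noncomputable def BB : ℝ := ∑' k, gB k

lemma hfn' : Summable (fun k : ℕ => ‖fA k‖) := hfn
lemma hgn' : Summable (fun k : ℕ => ‖gB k‖) := hgn

lemma absB : |BB| ≤ 8 := by
  have h1 : ‖BB‖ ≤ ∑' k, ‖gB k‖ := norm_tsum_le_tsum_norm hgn'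
  have h2 : ∑' k, ‖gB k‖ ≤ ∑' k : ℕ, 4 * (16 * |yc|) ^ k := by
    exact Summable.tsum_le_tsum g_norm_le hgn' (summable_geo.mul_left 4)
  have h3 : ∑' k : ℕ, 4 * (16 * |yc|) ^ k = 4 * (1 - 16 * |yc|)⁻¹ := by
    rw [tsum_mul_left, tsum_geometric_of_lt_one hq0 hq]
  have h4 : (4 : ℝ) * (1 - 16 * |yc|)⁻¹ ≤ 8 := by
    rw [abs_yc]; norm_num
  calc |BB| = ‖BB‖ := (Real.norm_eq_abs _).symm
    _ ≤ 4 * (1 - 16 * |yc|)⁻¹ := by rw [← h3]; exact h1.trans h2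
    _ ≤ 8 := h4

lemma eq1 : AA = 2 * yc * (AA * BB) + 1 := by
  have hAB : HasSum (fun n => ∑ i ∈ Finset.range (n + 1), fA i * gB (n - i)) (AA * BB) :=
    hasSum_sum_range_mul_of_summable_norm hfn' hgn'
  have h2 : HasSum (fun n => fA (n + 1)) (2 * yc * (AA * BB)) := by
    have h := hAB.mul_left (2 * yc)
    convert h using 1
    case e'_3 => rfl
    funext n
    have hsum : ∑ i ∈ Finset.range (n + 1), fA i * gB (n - i)
        = ((∑ i ∈ Finset.range (n + 1), catalan (2 * i) * catalan (2 * (n - i) + 1) : ℕ) : ℝ)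
          * yc ^ n := by
      push_cast
      rw [Finset.sum_mul]
      apply Finset.sum_congr rfl
      intro i hi
      have hle : i ≤ n := by simpa [Nat.lt_succ] using Finset.mem_range.mp hi
      unfold fA gB
      rw [show yc ^ n = yc ^ i * yc ^ (n - i) from by
        rw [← pow_add, show i + (n - i) = n from by omega]]
      ring
    rw [hsum]
    unfold fA
    rw [show 2 * (n + 1) = 2 * n + 2 from by ring, cat_even n]
    push_cast
    ring
  have h3 := (hasSum_nat_add_iff (f := fA) 1).mp h2
  have h4 : AA = 2 * yc * (AA * BB) + ∑ i ∈ Finset.range 1, fA i := h3.tsum_eq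
  simpa [fA] using h4

lemma eq2 : BB = AA * AA + yc * (BB * BB) := by
  have hAA : HasSum (fun n => ∑ i ∈ Finset.range (n + 1), fA i * fA (n - i)) (AA * AA) :=
    hasSum_sum_range_mul_of_summable_norm hfn' hfn'
  have hBB : HasSum (fun n => ∑ i ∈ Finset.range (n + 1), gB i * gB (n - i)) (BB * BB) :=
    hasSum_sum_range_mul_of_summable_norm hgn' hgn'
  -- the odd-index tail term
  set u : ℕ → ℝ := fun n =>
    ((∑ i ∈ Finset.range n, catalan (2 * i + 1) * catalan (2 * (n - 1 - i) + 1) : ℕ) : ℝ)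
      * yc ^ n with hu
  have h2 : HasSum (fun n => u (n + 1)) (yc * (BB * BB)) := by
    have h := hBB.mul_left yc
    convert h using 1
    case e'_3 => rfl
    funext n
    have hsum : ∑ i ∈ Finset.range (n + 1), gB i * gB (n - i)
        = ((∑ i ∈ Finset.range (n + 1), catalan (2 * i + 1) * catalan (2 * (n - i) + 1) : ℕ) : ℝ)
          * yc ^ n := by
      push_cast
      rw [Finset.sum_mul]
      apply Finset.sum_congr rfl
      intro i hi
      have hle : i ≤ n := by simpa [Nat.lt_succ] using Finset.mem_range.mp hi
      unfold gB
      rw [show yc ^ n = yc ^ i * yc ^ (n - i) from by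
        rw [← pow_add, show i + (n - i) = n from by omega]]
      ring
    rw [hsum, hu]
    simp only []
    rw [show (n + 1) - 1 = n from by omega]
    push_cast
    ring
  have h3 := (hasSum_nat_add_iff (f := u) 1).mp h2
  have h4 : HasSum u (yc * (BB * BB)) := by
    simpa [hu] using h3
  have h5 : HasSum gB (AA * AA + yc * (BB * BB)) := by
    have := hAA.add h4
    convert this using 1
    funext n
    unfold gB
    rw [cat_odd n]
    have hfst : ∑ i ∈ Finset.range (n + 1), fA i * fA (n - i)
        = ((∑ i ∈ Finset.range (n + 1), catalan (2 * i) * catalan (2 * (n - i)) : ℕ) : ℝ)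
          * yc ^ n := by
      push_cast
      rw [Finset.sum_mul]
      apply Finset.sum_congr rfl
      intro i hi
      have hle : i ≤ n := by simpa [Nat.lt_succ] using Finset.mem_range.mp hi
      unfold fA
      rw [show yc ^ n = yc ^ i * yc ^ (n - i) from by
        rw [← pow_add, show i + (n - i) = n from by omega]]
      ring
    rw [hfst, hu]
    push_cast
    ring
  exact (hgn'.of_norm.hasSum.unique h5)

lemma hy_val : yc = -(1024144 / 16781926730625) := rfl

lemma hA_sq : AA ^ 2 = 4096575 / 4096576 := by
  have hG : AA ^ 2 - 1 = 4 * yc * AA ^ 4 := by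
    linear_combination (4 * yc * AA ^ 2) * eq2 + (AA + 1 - 2 * yc * AA * BB) * eq1
  rw [hy_val] at hG
  have hfac : (AA ^ 2 - 4096575 / 4096576) * (AA ^ 2 + 4096575) = 0 := by
    linear_combination ((16781926730625 : ℝ) / 4096576) * hG
  have h2 : (0 : ℝ) < AA ^ 2 + 4096575 := by positivity
  rcases mul_eq_zero.mp hfac with h | h
  · linarith
  · linarith

lemma hA_pos : 0 < AA := by
  have habsA : |AA| ≤ 1 := by
    apply abs_le.mpr
    constructor <;> nlinarith [hA_sq]
  have habs : |AA * BB| ≤ 8 := by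
    rw [abs_mul]
    calc |AA| * |BB| ≤ 1 * 8 := mul_le_mul habsA absB (abs_nonneg _) (by norm_num)
      _ = 8 := by norm_num
  have ht := abs_le.mp habs
  rw [eq1, hy_val]
  have h1 := ht.1
  have h2 := ht.2
  nlinarith

theorem sqrt_seven_series_b :
    Summable (fun k : ℕ => shiftedFactorial (1/4) k * shiftedFactorial (3/4) k / ((Nat.factorial k : ℝ) * shiftedFactorial (3/2) k) * (-(16386304 / 16781926730625) : ℝ) ^ k) ∧
    Real.sqrt 7 = (2024 / 765 : ℝ) *
      ∑' k : ℕ, shiftedFactorial (1/4) k * shiftedFactorial (3/4) k / ((Nat.factorial k : ℝ) * shiftedFactorial (3/2) k) * (-(16386304 / 16781926730625) : ℝ) ^ k := by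
  constructor
  · exact (hfn'.of_norm).congr (fun k => (term_eq k).symm)
  · have ht : (∑' k : ℕ, shiftedFactorial (1/4) k * shiftedFactorial (3/4) k
        / ((Nat.factorial k : ℝ) * shiftedFactorial (3/2) k)
        * (-(16386304 / 16781926730625) : ℝ) ^ k) = AA := tsum_congr term_eq
    rw [ht]
    have hpos2 : 0 < (2024 / 765 : ℝ) * AA := by
      have := hA_pos
      positivity
    have h7 : ((2024 / 765 : ℝ) * AA) ^ 2 = 7 := by
      rw [mul_pow, hA_sq]; norm_num
    rw [← h7, Real.sqrt_sq hpos2.le]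
end
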